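/- Let n, m ≥ 1. If τ is a permutation of {1,…,k^n} attainable from k^n chips, and γ_1, …, γ_{k^n} are permutations of {1,…,k^m} each attainable from k^m chips, then the inflation τ[γ_1,…,γ_{k^n}] — the permutation of {1,…,k^{n+m}} whose entry at position (i−1)k^m + j is (τ(i)−1)k^m + γ_i(j) for 1 ≤ i ≤ k^n and 1 ≤ j ≤ k^m — is attainable from k^{n+m} chips. -/

import Mathlib

/-- A firing step for `N` labeled chips on the infinite directed `k`-ary tree with
vertex set `{1, 2, 3, …}`, root `1`, where the `j`-th child (`1 ≤ j ≤ k`) of vertex `v`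
is `k*(v-1)+j+1`.  A configuration assigns to each chip (element of `Fin N`,
representing labels `1,…,N`) a vertex.  A step picks `k` chips `t 0 < t 1 < ⋯ < t (k-1)`
all on a common vertex `v` and sends the `j`-th smallest to the `j`-th child. -/
def FireStep (k N : ℕ) (c c' : Fin N → ℕ) : Prop :=
  ∃ (v : ℕ) (t : Fin k → Fin N),
    StrictMono t ∧
    (∀ j, c (t j) = v) ∧
    (∀ j : Fin k, c' (t j) = k * (v - 1) + (j : ℕ) + 2) ∧
    (∀ i : Fin N, (∀ j, i ≠ t j) → c' i = c i)

/-- Reachable from the initial configuration of `k^ℓ` chips all on the root. -/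
def Reachable (k ℓ : ℕ) (c : Fin (k ^ ℓ) → ℕ) : Prop :=
  Relation.ReflTransGen (FireStep k (k ^ ℓ)) (fun _ => 1) c

/-- A configuration is stable if every vertex holds fewer than `k` chips. -/
def Stable (k N : ℕ) (c : Fin N → ℕ) : Prop :=
  ∀ v : ℕ, (Finset.univ.filter (fun i => c i = v)).card < k

/-- `layerStart k m` is the leftmost (smallest-numbered) vertex on layer `m+1`;
the vertices of layer `m+1` read left to right are `layerStart k m + p` for `0 ≤ p < k^m`. -/
def layerStart (k : ℕ) : ℕ → ℕ
  | 0 => 1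
  | m + 1 => k * (layerStart k m - 1) + 2

/-- `σ` is the permutation associated to some reachable stable configuration of `k^ℓ`
chips: `σ p` (0-based, representing label `σ p + 1`) is the chip on the `p`-th leftmost
vertex of layer `ℓ+1`. -/
def Attainable (k ℓ : ℕ) (σ : Equiv.Perm (Fin (k ^ ℓ))) : Prop :=
  ∃ c : Fin (k ^ ℓ) → ℕ, Reachable k ℓ c ∧ Stable k (k ^ ℓ) c ∧
    ∀ p : Fin (k ^ ℓ), c (σ p) = layerStart k ℓ + (p : ℕ)


lemma layerStart_pos (k : ℕ) : ∀ m, 1 ≤ layerStart k m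
  | 0 => le_refl 1
  | m + 1 => by simp only [layerStart]; omega

lemma layerStart_add (k n : ℕ) : ∀ m, layerStart k (n + m) = k ^ m * (layerStart k n - 1) + layerStart k m
  | 0 => by have := layerStart_pos k n; simp [layerStart]; omega
  | m + 1 => by
    have ih := layerStart_add k n m
    obtain ⟨S, hS⟩ : ∃ S, layerStart k m = S + 1 := ⟨layerStart k m - 1, by have := layerStart_pos k m; omega⟩
    show layerStart k ((n + m) + 1) = _
    simp only [layerStart, ih, hS]
    have e1 : k ^ m * (layerStart k n - 1) + (S + 1) - 1 = k ^ m * (layerStart k n - 1) + S := by omega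
    have e2 : S + 1 - 1 = S := by omega
    rw [e1, e2]
    ring

def phi (k x0 : ℕ) (u : ℕ) : ℕ :=
  if u ≤ 1 then x0 + 1
  else k * (phi k x0 ((u - 2) / k + 1) - 1) + (u - 2) % k + 2
  termination_by u
  decreasing_by
    have : (u - 2) / k ≤ u - 2 := Nat.div_le_self _ _
    omega

lemma phi_le_one (k x0 u : ℕ) (h : u ≤ 1) : phi k x0 u = x0 + 1 := by
  rw [phi, if_pos h]

lemma phi_pred_succ (k x0 v : ℕ) : phi k x0 (v - 1 + 1) = phi k x0 v := by
  match v with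
  | 0 => rw [phi_le_one k x0 _ (by omega), phi_le_one k x0 _ (by omega)]
  | v + 1 => simp

lemma phi_child (k x0 : ℕ) (hk : 0 < k) (v j : ℕ) (hj : j < k) :
    phi k x0 (k * (v - 1) + j + 2) = k * (phi k x0 v - 1) + j + 2 := by
  rw [phi]
  have h2 : ¬ (k * (v - 1) + j + 2 ≤ 1) := by omega
  rw [if_neg h2]
  have e1 : k * (v - 1) + j + 2 - 2 = k * (v - 1) + j := by omega
  rw [e1, Nat.mul_add_div hk, Nat.div_eq_of_lt hj, Nat.mul_add_mod, Nat.mod_eq_of_lt hj,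
    Nat.add_zero, phi_pred_succ]

lemma phi_layer (k x0 : ℕ) (hk : 0 < k) : ∀ m q, q < k ^ m →
    phi k x0 (layerStart k m + q) = k ^ m * x0 + (layerStart k m + q)
  | 0, q, hq => by
    have hk0 : k ^ 0 = 1 := pow_zero k
    have : q = 0 := by omega
    subst this
    simp only [layerStart, pow_zero, one_mul]
    rw [phi]
    simp
  | m + 1, q, hq => by
    obtain ⟨q1, j, hjk, rfl⟩ : ∃ q1 j, j < k ∧ q = k * q1 + j := by
      refine ⟨q / k, q % k, Nat.mod_lt _ hk, ?_⟩
      rw [Nat.div_add_mod]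
    have hq1 : q1 < k ^ m := by
      rw [pow_succ] at hq
      by_contra h
      push_neg at h
      have h1 := Nat.mul_le_mul_right k h
      rw [mul_comm q1 k] at h1
      omega
    obtain ⟨S, hS⟩ : ∃ S, layerStart k m = S + 1 := ⟨layerStart k m - 1, by have := layerStart_pos k m; omega⟩
    have key : layerStart k (m + 1) + (k * q1 + j) = k * ((layerStart k m + q1) - 1) + j + 2 := by
      simp only [layerStart, hS]
      have e2 : S + 1 - 1 = S := by omega
      have e3 : S + 1 + q1 - 1 = S + q1 := by omega
      rw [e2, e3]; ring
    rw [key, phi_child k x0 hk _ j hjk, phi_layer k x0 hk m q1 hq1]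
    simp only [layerStart, hS]
    have e4 : k ^ m * x0 + (S + 1 + q1) - 1 = k ^ m * x0 + (S + q1) := by omega
    have e5 : S + 1 + q1 - 1 = S + q1 := by omega
    have e2 : S + 1 - 1 = S := by omega
    rw [e4]
    rw [e5]
    ring

lemma rtg_chain {α : Type*} {r : α → α → Prop} (G : ℕ → α) :
    ∀ R, (∀ s, s < R → r (G s) (G (s + 1))) → Relation.ReflTransGen r (G 0) (G R)
  | 0, _ => Relation.ReflTransGen.refl
  | R + 1, h =>
    (rtg_chain G R (fun s hs => h s (by omega))).tail (h R (by omega))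

lemma rtg_map {α β : Type*} {r : α → α → Prop} {r' : β → β → Prop} (f : α → β)
    (h : ∀ a b, r a b → Relation.ReflTransGen r' (f a) (f b)) {a b : α}
    (hab : Relation.ReflTransGen r a b) : Relation.ReflTransGen r' (f a) (f b) := by
  induction hab with
  | refl => exact Relation.ReflTransGen.refl
  | tail _ hbc ih => exact ih.trans (h _ _ hbc)

def blk (k n m : ℕ) (hk : 0 < k) (L : Fin (k ^ (n + m))) : Fin (k ^ n) :=
  ⟨(L : ℕ) / k ^ m, by
    have hL : (L : ℕ) < k ^ n * k ^ m := lt_of_lt_of_eq L.isLt (pow_add k n m)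
    exact Nat.div_lt_iff_lt_mul (pow_pos hk m) |>.mpr hL⟩

def idx (k n m : ℕ) (hk : 0 < k) (L : Fin (k ^ (n + m))) : Fin (k ^ m) :=
  ⟨(L : ℕ) % k ^ m, Nat.mod_lt _ (pow_pos hk m)⟩

def mkL (k n m : ℕ) (i : Fin (k ^ n)) (j : Fin (k ^ m)) : Fin (k ^ (n + m)) :=
  ⟨(i : ℕ) * k ^ m + (j : ℕ), by
    have hi := i.isLt
    have hj := j.isLt
    have h : (i : ℕ) * k ^ m + (j : ℕ) < k ^ n * k ^ m := by
      calc (i : ℕ) * k ^ m + (j : ℕ) < (i : ℕ) * k ^ m + k ^ m := Nat.add_lt_add_left hj _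
        _ = ((i : ℕ) + 1) * k ^ m := by ring
        _ ≤ k ^ n * k ^ m := Nat.mul_le_mul (Nat.succ_le_of_lt hi) (le_refl _)
    rw [pow_add]; exact h⟩

lemma blk_mk (k n m : ℕ) (hk : 0 < k) (i : Fin (k ^ n)) (j : Fin (k ^ m)) :
    blk k n m hk (mkL k n m i j) = i := by
  apply Fin.ext
  show ((i : ℕ) * k ^ m + (j : ℕ)) / k ^ m = i
  rw [Nat.add_comm, Nat.add_mul_div_right _ _ (pow_pos hk m), Nat.div_eq_of_lt j.isLt]
  omega

lemma idx_mk (k n m : ℕ) (hk : 0 < k) (i : Fin (k ^ n)) (j : Fin (k ^ m)) :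
    idx k n m hk (mkL k n m i j) = j := by
  apply Fin.ext
  show ((i : ℕ) * k ^ m + (j : ℕ)) % k ^ m = j
  rw [Nat.add_comm ((i : ℕ) * k ^ m) (j : ℕ), Nat.add_mul_mod_self_right, Nat.mod_eq_of_lt j.isLt]

lemma mk_blk_idx (k n m : ℕ) (hk : 0 < k) (L : Fin (k ^ (n + m))) :
    mkL k n m (blk k n m hk L) (idx k n m hk L) = L := by
  apply Fin.ext
  show (L : ℕ) / k ^ m * k ^ m + (L : ℕ) % k ^ m = L
  rw [Nat.div_add_mod']

open Classical in
noncomputable def G1 (k n m : ℕ) (hk : 0 < k) (v : ℕ) (t : Fin k → Fin (k ^ n))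
    (c : Fin (k ^ n) → ℕ) (r : ℕ) (L : Fin (k ^ (n + m))) : ℕ :=
  if h : ∃ a, blk k n m hk L = t a then
    (if (L : ℕ) % k ^ m < r then k * (v - 1) + (h.choose : ℕ) + 2 else v)
  else c (blk k n m hk L)

lemma phase1_step (k n m : ℕ) (hk : 0 < k) (c c' : Fin (k ^ n) → ℕ)
    (h : FireStep k (k ^ n) c c') :
    Relation.ReflTransGen (FireStep k (k ^ (n + m)))
      (fun L => c (blk k n m hk L)) (fun L => c' (blk k n m hk L)) := by
  classical
  obtain ⟨v, t, hmono, hat, hchild, hfix⟩ := h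
  have hkm : 0 < k ^ m := pow_pos hk m
  have hG0 : G1 k n m hk v t c 0 = fun L => c (blk k n m hk L) := by
    funext L
    simp only [G1]
    split_ifs with h1 h2
    · exact absurd h2 (Nat.not_lt_zero _)
    · exact ((congrArg c h1.choose_spec).trans (hat h1.choose)).symm
    · rfl
  have hGend : G1 k n m hk v t c (k ^ m) = fun L => c' (blk k n m hk L) := by
    funext L
    simp only [G1]
    split_ifs with h1 h2
    · exact ((congrArg c' h1.choose_spec).trans (hchild h1.choose)).symm
    · exact absurd (Nat.mod_lt _ hkm) h2
    · exact (hfix _ (by push_neg at h1; exact h1)).symm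
  rw [← hG0, ← hGend]
  apply rtg_chain
  intro r hr
  refine ⟨v, fun a => mkL k n m (t a) ⟨r, hr⟩, ?_, ?_, ?_, ?_⟩
  · intro a b hab
    have h1 : (t a : ℕ) < t b := hmono hab
    have h2 : ((t a : ℕ) + 1) * k ^ m ≤ (t b : ℕ) * k ^ m :=
      Nat.mul_le_mul_right _ (by omega)
    rw [add_mul, one_mul] at h2
    show ((t a : ℕ) * k ^ m + r) < ((t b : ℕ) * k ^ m + r)
    omega
  · intro a
    simp only [G1, blk_mk]
    rw [dif_pos ⟨a, rfl⟩]
    have : (mkL k n m (t a) ⟨r, hr⟩ : ℕ) % k ^ m = r := by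
      have := idx_mk k n m hk (t a) ⟨r, hr⟩
      exact congrArg Fin.val this
    rw [this, if_neg (by omega)]
  · intro a
    have hbm : blk k n m hk (mkL k n m (t a) ⟨r, hr⟩) = t a := blk_mk k n m hk _ _
    have hex : ∃ b, blk k n m hk (mkL k n m (t a) ⟨r, hr⟩) = t b := ⟨a, hbm⟩
    have hch : hex.choose = a := hmono.injective (hex.choose_spec.symm.trans hbm)
    simp only [G1]
    rw [dif_pos hex]
    have hmod : (mkL k n m (t a) ⟨r, hr⟩ : ℕ) % k ^ m = r :=
      congrArg Fin.val (idx_mk k n m hk (t a) ⟨r, hr⟩)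
    rw [hmod, if_pos (by omega), hch]
  · intro L hL
    simp only [G1]
    split_ifs with h1 h2 h3 h3
    · rfl
    · -- h2 : mod < r+1, h3 : ¬ mod < r, so mod = r, so L = mkL (t h1.choose) r
      exfalso
      have hmod : (L : ℕ) % k ^ m = r := by omega
      apply hL h1.choose
      have hidx : idx k n m hk L = ⟨r, hr⟩ := Fin.ext hmod
      exact (mk_blk_idx k n m hk L).symm.trans (congrArg₂ (mkL k n m) h1.choose_spec hidx)
    · exfalso; omega
    · rfl
    · rfl

lemma subtree_lift (k n m : ℕ) (hk : 0 < k) (x0 : ℕ) (i : Fin (k ^ n))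
    (base : Fin (k ^ (n + m)) → ℕ) (e e' : Fin (k ^ m) → ℕ)
    (h : FireStep k (k ^ m) e e') :
    FireStep k (k ^ (n + m))
      (fun L => if blk k n m hk L = i then phi k x0 (e (idx k n m hk L)) else base L)
      (fun L => if blk k n m hk L = i then phi k x0 (e' (idx k n m hk L)) else base L) := by
  obtain ⟨v, t, hmono, hat, hchild, hfix⟩ := h
  refine ⟨phi k x0 v, fun a => mkL k n m i (t a), ?_, ?_, ?_, ?_⟩
  · intro a b hab
    have h1 : (t a : ℕ) < t b := hmono hab
    show ((i : ℕ) * k ^ m + (t a : ℕ)) < ((i : ℕ) * k ^ m + (t b : ℕ))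
    omega
  · intro a
    simp only
    rw [if_pos (blk_mk k n m hk i (t a)), idx_mk, hat]
  · intro a
    simp only
    rw [if_pos (blk_mk k n m hk i (t a)), idx_mk, hchild a,
      phi_child k x0 hk v (a : ℕ) a.isLt]
  · intro L hL
    simp only
    split_ifs with h1
    · have : ∀ a, idx k n m hk L ≠ t a := by
        intro a ha
        apply hL a
        exact (mk_blk_idx k n m hk L).symm.trans (congrArg₂ (mkL k n m) h1 ha)
      rw [hfix _ this]
    · rfl

lemma rtg_chain' {α : Type*} {r : α → α → Prop} (G : ℕ → α) :
    ∀ R, (∀ s, s < R → Relation.ReflTransGen r (G s) (G (s + 1))) →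
      Relation.ReflTransGen r (G 0) (G R)
  | 0, _ => Relation.ReflTransGen.refl
  | R + 1, h =>
    (rtg_chain' G R (fun s hs => h s (by omega))).trans (h R (by omega))

theorem stmt4' (k n m : ℕ) (hk : 2 ≤ k)
    (τ : Equiv.Perm (Fin (k ^ n))) (γ : Fin (k ^ n) → Equiv.Perm (Fin (k ^ m)))
    (hτ : ∃ c : Fin (k ^ n) → ℕ,
        Relation.ReflTransGen (FireStep k (k ^ n)) (fun _ => 1) c ∧
        (∀ v : ℕ, (Finset.univ.filter (fun i => c i = v)).card < k) ∧
        ∀ p : Fin (k ^ n), c (τ p) = layerStart k n + (p : ℕ))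
    (hγ : ∀ i, ∃ c : Fin (k ^ m) → ℕ,
        Relation.ReflTransGen (FireStep k (k ^ m)) (fun _ => 1) c ∧
        (∀ v : ℕ, (Finset.univ.filter (fun i => c i = v)).card < k) ∧
        ∀ p : Fin (k ^ m), c ((γ i) p) = layerStart k m + (p : ℕ))
    (ρ : Equiv.Perm (Fin (k ^ (n + m))))
    (hρ : ∀ (i : Fin (k ^ n)) (j : Fin (k ^ m)),
      (ρ (mkL k n m i j) : ℕ) = (τ i : ℕ) * k ^ m + ((γ i) j : ℕ)) :
    ∃ c : Fin (k ^ (n + m)) → ℕ,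
        Relation.ReflTransGen (FireStep k (k ^ (n + m))) (fun _ => 1) c ∧
        (∀ v : ℕ, (Finset.univ.filter (fun i => c i = v)).card < k) ∧
        ∀ p : Fin (k ^ (n + m)), c (ρ p) = layerStart k (n + m) + (p : ℕ) := by
  classical
  have hk0 : 0 < k := by omega
  have hkm : 0 < k ^ m := pow_pos hk0 m
  have hLn := layerStart_pos k n
  obtain ⟨cτ, hreachτ, hstabτ, hvalτ⟩ := hτ
  choose d hreachd hstabd hvald using hγ
  set cfin : Fin (k ^ (n + m)) → ℕ := fun L =>
    phi k (layerStart k n - 1 + (τ.symm (blk k n m hk0 L) : ℕ))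
      (d (τ.symm (blk k n m hk0 L)) (idx k n m hk0 L)) with hcfin
  have hcτi : ∀ b : Fin (k ^ n), cτ b = layerStart k n + (τ.symm b : ℕ) := by
    intro b
    have := hvalτ (τ.symm b)
    rwa [Equiv.apply_symm_apply] at this
  -- the value property
  have hval : ∀ p : Fin (k ^ (n + m)), cfin (ρ p) = layerStart k (n + m) + (p : ℕ) := by
    intro p
    set i := blk k n m hk0 p with hi
    set j := idx k n m hk0 p with hj
    have hp : mkL k n m i j = p := mk_blk_idx k n m hk0 p
    have hρv : (ρ (mkL k n m i j) : ℕ) = (τ i : ℕ) * k ^ m + ((γ i) j : ℕ) := hρ i j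
    rw [hp] at hρv
    have hρp : ρ p = mkL k n m (τ i) ((γ i) j) := Fin.ext hρv
    rw [hcfin]
    simp only [hρp, blk_mk, idx_mk, Equiv.symm_apply_apply]
    rw [hvald i j, phi_layer k _ hk0 m _ (by have := j.isLt; omega),
      layerStart_add k n m]
    have hpval : (p : ℕ) = (i : ℕ) * k ^ m + (j : ℕ) := (congrArg Fin.val hp).symm
    rw [hpval]
    ring
  refine ⟨cfin, ?_, ?_, hval⟩
  · -- Reachability
    -- phase 1
    have P1 : Relation.ReflTransGen (FireStep k (k ^ (n + m))) (fun _ => 1)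
        (fun L => cτ (blk k n m hk0 L)) :=
      rtg_map (fun c L => c (blk k n m hk0 L))
        (fun a b hab => phase1_step k n m hk0 a b hab) hreachτ
    -- phase 2
    set H : ℕ → Fin (k ^ (n + m)) → ℕ := fun s L =>
      if (blk k n m hk0 L : ℕ) < s then cfin L else cτ (blk k n m hk0 L) with hH
    have P2 : Relation.ReflTransGen (FireStep k (k ^ (n + m))) (H 0) (H (k ^ n)) := by
      apply rtg_chain'
      intro s hs
      set i : Fin (k ^ n) := ⟨s, hs⟩ with hidef
      set p := τ.symm i with hpdef
      set x0 := layerStart k n - 1 + (p : ℕ) with hx0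
      set M : (Fin (k ^ m) → ℕ) → Fin (k ^ (n + m)) → ℕ := fun e L =>
        if blk k n m hk0 L = i then phi k x0 (e (idx k n m hk0 L)) else H s L with hM
      have hM1 : M (fun _ => 1) = H s := by
        funext L
        show (if blk k n m hk0 L = i then phi k x0 1 else H s L) = H s L
        by_cases h1 : blk k n m hk0 L = i
        · have hvs : (blk k n m hk0 L : ℕ) = s := by rw [h1]
          rw [if_pos h1]
          show _ = if (blk k n m hk0 L : ℕ) < s then cfin L else cτ (blk k n m hk0 L)
          rw [if_neg (by omega), phi_le_one k x0 1 (le_refl 1), hcτi, h1, hx0, hpdef]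
          omega
        · rw [if_neg h1]
      have hM2 : M (d p) = H (s + 1) := by
        funext L
        show (if blk k n m hk0 L = i then phi k x0 (d p (idx k n m hk0 L)) else H s L)
          = if (blk k n m hk0 L : ℕ) < s + 1 then cfin L else cτ (blk k n m hk0 L)
        by_cases h1 : blk k n m hk0 L = i
        · have hvs : (blk k n m hk0 L : ℕ) = s := by rw [h1]
          rw [if_pos h1, if_pos (by omega)]
          show phi k x0 (d p (idx k n m hk0 L)) = cfin L
          rw [hx0, hpdef]
          simp only [hcfin]
          rw [h1]
        · rw [if_neg h1]
          have hne : (blk k n m hk0 L : ℕ) ≠ s := fun hc => h1 (Fin.ext hc)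
          show (if (blk k n m hk0 L : ℕ) < s then cfin L else cτ (blk k n m hk0 L)) = _
          by_cases h2 : (blk k n m hk0 L : ℕ) < s
          · rw [if_pos h2, if_pos (by omega)]
          · rw [if_neg h2, if_neg (by omega)]
      rw [← hM1, ← hM2]
      exact rtg_map M
        (fun a b hab => Relation.ReflTransGen.single
          (subtree_lift k n m hk0 x0 i (H s) a b hab)) (hreachd p)
    have hH0 : H 0 = fun L => cτ (blk k n m hk0 L) := by
      funext L; rw [hH]; simp
    have hHend : H (k ^ n) = cfin := by
      funext L
      rw [hH]
      simp only [(blk k n m hk0 L).isLt, if_pos]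
    rw [hH0, hHend] at P2
    exact P1.trans P2
  · -- Stability
    intro v
    have hinj : Function.Injective cfin := by
      intro L1 L2 hL
      have h1 := hval (ρ.symm L1)
      have h2 := hval (ρ.symm L2)
      rw [Equiv.apply_symm_apply] at h1 h2
      have : (ρ.symm L1 : ℕ) = (ρ.symm L2 : ℕ) := by omega
      have := ρ.symm.injective (Fin.ext this)
      exact this
    calc (Finset.univ.filter (fun i => cfin i = v)).card ≤ 1 := by
          apply Finset.card_le_one.mpr
          intro a ha b hb
          simp only [Finset.mem_filter] at ha hb
          exact hinj (ha.2.trans hb.2.symm)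
      _ < k := by omega

/-- If `τ` is attainable from `k^n` chips and `γ 0, …, γ (k^n - 1)` are attainable from
`k^m` chips, then the inflation `τ[γ_1,…,γ_{k^n}]`, whose entry at (0-based) position
`i * k^m + j` is `τ i * k^m + γ i j`, is attainable from `k^(n+m)` chips. -/
theorem stmt4 (k n m : ℕ) (hk : 2 ≤ k) (hn : 1 ≤ n) (hm : 1 ≤ m)
    (τ : Equiv.Perm (Fin (k ^ n))) (γ : Fin (k ^ n) → Equiv.Perm (Fin (k ^ m)))
    (hτ : Attainable k n τ) (hγ : ∀ i, Attainable k m (γ i))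
    (ρ : Equiv.Perm (Fin (k ^ (n + m))))
    (hρ : ∀ (i : Fin (k ^ n)) (j : Fin (k ^ m)),
      (ρ ⟨(i : ℕ) * k ^ m + (j : ℕ), by
        have hi := i.isLt
        have hj := j.isLt
        have h : (i : ℕ) * k ^ m + (j : ℕ) < k ^ n * k ^ m := by
          calc (i : ℕ) * k ^ m + (j : ℕ) < (i : ℕ) * k ^ m + k ^ m := by omega
            _ = ((i : ℕ) + 1) * k ^ m := by ring
            _ ≤ k ^ n * k ^ m := Nat.mul_le_mul (by omega) (le_refl _)
        simpa [pow_add] using h⟩ : ℕ) = (τ i : ℕ) * k ^ m + ((γ i) j : ℕ)) :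
    Attainable k (n + m) ρ := by
  exact stmt4' k n m hk τ γ hτ hγ ρ (fun i j => hρ i j)
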